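/- Let A be a commutative ring, f ∈ A a nonzerodivisor, and A_f the localization of A away from f. Let (I_i)_{i ∈ ι} be a family of ideals of A_f whose intersection is contained in the nilradical of A_f. For each i, let J_i ⊆ A be the preimage of I_i under the localization map A → A_f. Then: (a) for each i, the image of f in A/J_i is a nonzerodivisor; and (b) the intersection of the J_i is contained in the nilradical of A. -/

import Mathlib

/-- Let `f` be a nonzerodivisor of a commutative ring `A` and `(I i)` a family of ideals of
the localization `A_f` whose intersection is contained in the nilradical.  Let `J i` be the
preimage of `I i` in `A`.  Then the image of `f` in each `A ⧸ J i` is a nonzerodivisor and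
the intersection of the `J i` is contained in the nilradical of `A`. -/
theorem comap_ideals_of_localization_away
    {A : Type*} [CommRing A] (f : A) (hf : f ∈ nonZeroDivisors A)
    {ι : Type*} (I : ι → Ideal (Localization.Away f))
    (hI : (⨅ i, I i) ≤ nilradical (Localization.Away f)) :
    (∀ i, Ideal.Quotient.mk (Ideal.comap (algebraMap A (Localization.Away f)) (I i)) f ∈
        nonZeroDivisors (A ⧸ Ideal.comap (algebraMap A (Localization.Away f)) (I i))) ∧
      (⨅ i, Ideal.comap (algebraMap A (Localization.Away f)) (I i)) ≤ nilradical A := by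
  have hfu : IsUnit (algebraMap A (Localization.Away f) f) :=
    IsLocalization.map_units (Localization.Away f) (⟨f, Submonoid.mem_powers f⟩ :
      Submonoid.powers f)
  constructor
  · intro i
    rw [mem_nonZeroDivisors_iff_right]
    intro x hx
    obtain ⟨a, rfl⟩ := Ideal.Quotient.mk_surjective x
    rw [← map_mul, Ideal.Quotient.eq_zero_iff_mem, Ideal.mem_comap, map_mul] at hx
    rw [Ideal.Quotient.eq_zero_iff_mem, Ideal.mem_comap]
    rwa [mul_comm, Ideal.unit_mul_mem_iff_mem _ hfu] at hx
  · intro a ha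
    simp only [Ideal.mem_iInf, Ideal.mem_comap] at ha
    have : algebraMap A (Localization.Away f) a ∈ nilradical _ := hI (Ideal.mem_iInf.mpr ha)
    obtain ⟨n, hn⟩ := this
    rw [← map_pow, Ideal.zero_eq_bot, Ideal.mem_bot] at hn
    rw [IsLocalization.map_eq_zero_iff (Submonoid.powers f)] at hn
    obtain ⟨⟨m, k, rfl⟩, hm⟩ := hn
    exact ⟨n, (pow_mem hf k).2 _ (by rwa [mul_comm] at hm)⟩
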